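/- Let B be an infinite-dimensional Banach space with a Banach frame Φ = (φ_λ)_{λ∈Λ} over a σ-compact index space Λ, with admissible Banach space 𝔅 and finite upper frame bound. Then the strong complement property constant σ_Φ equals 0: for every ε > 0 there exist S ⊆ Λ and unit vectors u, v ∈ B with ‖(φ_λ(u))_{λ∈S}‖_𝔅 ≤ ε and ‖(φ_λ(v))_{λ∈Λ\S}‖_𝔅 ≤ ε. Consequently phase retrieval is never uniformly stable in infinite dimensions. -/

import Mathlib

open scoped BigOperators

/-- An admissible Banach space `E` of `K`-valued families over `Λ`, given by a linear
embedding into `Λ → K`, which is solid, norm-determined by absolute values, contains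
indicators of compact sets, and in which compactly supported elements are dense. -/
structure AdmissibleEmbedding (K : Type) [RCLike K] (Λ : Type) [TopologicalSpace Λ]
    (E : Type) [NormedAddCommGroup E] [NormedSpace K E] where
  emb : E →ₗ[K] (Λ → K)
  inj : Function.Injective emb
  solid_exists : ∀ (w : Λ → K) (z : E), (∀ l, ‖w l‖ ≤ ‖emb z l‖) →
    ∃ w' : E, emb w' = w ∧ ‖w'‖ ≤ ‖z‖
  norm_abs : ∀ w w' : E, (∀ l, ‖emb w l‖ = ‖emb w' l‖) → ‖w‖ = ‖w'‖
  indicator_mem : ∀ Λ' : Set Λ, IsCompact Λ' → ∃ e : E, emb e = Λ'.indicator (fun _ => (1 : K))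
  dense_compact : Dense {e : E | ∃ Λ' : Set Λ, IsCompact Λ' ∧ ∀ l, l ∉ Λ' → emb e l = 0}

/-- A Banach frame `Φ = (φ_λ)` for `B` with associated admissible space `E`:
frame inequalities, a continuous reconstruction operator, and distinguished elements of `E`
representing the coefficient family, the phaseless coefficient family, and restricted
coefficient families. -/
structure BanachFramePR (K : Type) [RCLike K] (Λ : Type) [TopologicalSpace Λ]
    (B : Type) [NormedAddCommGroup B] [NormedSpace K B]
    (E : Type) [NormedAddCommGroup E] [NormedSpace K E]
    (adm : AdmissibleEmbedding K Λ E) where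
  Φ : Λ → (B →L[K] K)
  contΦ : Continuous Φ
  coeff : B → E
  coeff_spec : ∀ x l, adm.emb (coeff x) l = Φ l x
  absCoeff : B → E
  absCoeff_spec : ∀ x l, adm.emb (absCoeff x) l = (‖Φ l x‖ : K)
  restrict : Set Λ → B → E
  restrict_spec : ∀ (S : Set Λ) x l, adm.emb (restrict S x) l = S.indicator (fun l => Φ l x) l
  A : ℝ
  C : ℝ
  hA : 0 < A
  hAC : A ≤ C
  lower : ∀ x, A * ‖x‖ ≤ ‖coeff x‖
  upper : ∀ x, ‖coeff x‖ ≤ C * ‖x‖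
  recon : E → B
  recon_cont : Continuous recon
  recon_left : ∀ x, recon (coeff x) = x

/-- The quotient distance `d(x,y) = inf_{|τ|=1} ‖x - τ • y‖`. -/
noncomputable def phaseDist (K : Type) [RCLike K] {B : Type} [NormedAddCommGroup B]
    [NormedSpace K B] (x y : B) : ℝ :=
  sInf {r : ℝ | ∃ τ : K, ‖τ‖ = 1 ∧ r = ‖x - τ • y‖}

/-- For a Banach frame of an infinite-dimensional Banach space over a σ-compact index
space, the strong complement property constant vanishes: `σ_Φ = 0`, and for every `ε > 0`
there are `S ⊆ Λ` and unit vectors `u, v` whose restricted coefficient families over `S`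
and `Λ \ S` respectively have norm at most `ε`. -/
theorem stmt_12 {K Λ B E : Type} [RCLike K] [TopologicalSpace Λ] [SigmaCompactSpace Λ]
    [NormedAddCommGroup B] [NormedSpace K B] [CompleteSpace B]
    (hinf : ¬ FiniteDimensional K B)
    [NormedAddCommGroup E] [NormedSpace K E] [CompleteSpace E]
    (adm : AdmissibleEmbedding K Λ E) (F : BanachFramePR K Λ B E adm) :
    (sSup {s : ℝ | 0 ≤ s ∧ ∀ S : Set Λ,
        s ≤ max (sSup {a : ℝ | 0 ≤ a ∧ ∀ x : B, a * ‖x‖ ≤ ‖F.restrict S x‖})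
                (sSup {a : ℝ | 0 ≤ a ∧ ∀ x : B, a * ‖x‖ ≤ ‖F.restrict Sᶜ x‖})} = 0) ∧
    (∀ ε : ℝ, 0 < ε → ∃ (S : Set Λ) (u v : B), ‖u‖ = 1 ∧ ‖v‖ = 1 ∧
      ‖F.restrict S u‖ ≤ ε ∧ ‖F.restrict Sᶜ v‖ ≤ ε) := by
  classical
  -- B is nontrivial
  haveI hnt : Nontrivial B := by
    by_contra h
    rw [not_nontrivial_iff_subsingleton] at h
    exact hinf (Module.Finite.of_basis (Module.Basis.empty B (ι := Fin 0)))
  obtain ⟨x1, hx1⟩ : ∃ x : B, x ≠ 0 := exists_ne 0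
  set x0 : B := ((‖x1‖ : K))⁻¹ • x1 with hx0def
  have hx0 : ‖x0‖ = 1 := by
    rw [hx0def, norm_smul, norm_inv]
    simp only [RCLike.norm_ofReal, abs_norm]
    exact inv_mul_cancel₀ (norm_ne_zero_iff.mpr hx1)
  -- solidity in norm form
  have hemb_le : ∀ (w z : E), (∀ l, ‖adm.emb w l‖ ≤ ‖adm.emb z l‖) → ‖w‖ ≤ ‖z‖ := by
    intro w z h
    obtain ⟨w', hw', hn⟩ := adm.solid_exists (adm.emb w) z h
    rwa [adm.inj hw'] at hn
  -- restriction is dominated by the full coefficient family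
  have hRC : ∀ (S : Set Λ) (x : B), ‖F.restrict S x‖ ≤ ‖F.coeff x‖ := by
    intro S x
    apply hemb_le
    intro l
    rw [F.restrict_spec, F.coeff_spec]
    by_cases hl : l ∈ S
    · rw [Set.indicator_of_mem hl]
    · rw [Set.indicator_of_notMem hl]; simp
  have hC0 : (0:ℝ) ≤ F.C := le_trans F.hA.le F.hAC
  -- the main construction
  have hmain : ∀ ε : ℝ, 0 < ε → ∃ (S : Set Λ) (u v : B), ‖u‖ = 1 ∧ ‖v‖ = 1 ∧
      ‖F.restrict S u‖ ≤ ε ∧ ‖F.restrict Sᶜ v‖ ≤ ε := by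
    intro ε hε
    -- approximate coeff x0 by a compactly supported element
    have hcl : F.coeff x0 ∈ closure {e : E | ∃ Λ' : Set Λ, IsCompact Λ' ∧
        ∀ l, l ∉ Λ' → adm.emb e l = 0} := adm.dense_compact _
    rw [Metric.mem_closure_iff] at hcl
    obtain ⟨e, ⟨S, hScomp, hSsupp⟩, hdist⟩ := hcl ε hε
    rw [dist_eq_norm] at hdist
    -- the v part : v = x0
    have hv : ‖F.restrict Sᶜ x0‖ ≤ ε := by
      refine le_trans (hemb_le _ (F.coeff x0 - e) ?_) hdist.le
      intro l
      rw [F.restrict_spec, map_sub]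
      by_cases hl : l ∈ S
      · rw [Set.indicator_of_notMem (by simpa using hl)]; simp
      · rw [Set.indicator_of_mem (by simpa using hl)]
        simp [F.coeff_spec, hSsupp l hl]
    -- the u part
    obtain ⟨eS, heS⟩ := adm.indicator_mem S hScomp
    set δ : ℝ := ε / (‖eS‖ + 1) with hδdef
    have hden : (0:ℝ) < ‖eS‖ + 1 := by positivity
    have hδ : 0 < δ := div_pos hε hden
    -- finite δ-net for the compact image of S under Φ
    have htb := (hScomp.image F.contΦ).totallyBounded
    rw [Metric.totallyBounded_iff] at htb
    obtain ⟨t, htfin, htcov⟩ := htb δ hδ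
    -- a nonzero vector killed by all functionals in the net
    have hker : ∃ u0 : B, u0 ≠ 0 ∧ ∀ ψ ∈ t, ψ u0 = 0 := by
      by_contra hcon
      push_neg at hcon
      haveI := htfin.fintype
      let L : B →ₗ[K] (t → K) := LinearMap.pi (fun ψ : t => (ψ.1 : B →ₗ[K] K))
      have hL0 : ∀ x : B, L x = 0 → x = 0 := by
        intro x hx
        by_contra h0
        obtain ⟨ψ, hψt, hψ⟩ := hcon x h0
        exact hψ (congrFun hx ⟨ψ, hψt⟩)
      have hLinj : Function.Injective L :=
        LinearMap.ker_eq_bot.mp (LinearMap.ker_eq_bot'.mpr hL0)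
      exact hinf (FiniteDimensional.of_injective L hLinj)
    obtain ⟨u0, hu0, hu0k⟩ := hker
    set u : B := ((‖u0‖ : K))⁻¹ • u0 with hudef
    have hu : ‖u‖ = 1 := by
      rw [hudef, norm_smul, norm_inv]
      simp only [RCLike.norm_ofReal, abs_norm]
      exact inv_mul_cancel₀ (norm_ne_zero_iff.mpr hu0)
    have huk : ∀ ψ ∈ t, ψ u = 0 := by
      intro ψ hψ
      rw [hudef, map_smul, hu0k ψ hψ, smul_zero]
    have hΦu : ∀ l ∈ S, ‖F.Φ l u‖ ≤ δ := by
      intro l hl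
      have : F.Φ l ∈ ⋃ y ∈ t, Metric.ball y δ := htcov ⟨l, hl, rfl⟩
      simp only [Set.mem_iUnion, Metric.mem_ball] at this
      obtain ⟨ψ, hψt, hψd⟩ := this
      have : F.Φ l u = (F.Φ l - ψ) u := by simp [huk ψ hψt]
      rw [this]
      calc ‖(F.Φ l - ψ) u‖ ≤ ‖F.Φ l - ψ‖ * ‖u‖ := (F.Φ l - ψ).le_opNorm u
        _ ≤ δ := by rw [hu, mul_one]; exact le_of_lt (by rwa [dist_eq_norm] at hψd)
    have hru : ‖F.restrict S u‖ ≤ ε := by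
      have h1 : ‖F.restrict S u‖ ≤ ‖(δ : K) • eS‖ := by
        apply hemb_le
        intro l
        rw [F.restrict_spec, map_smul, Pi.smul_apply, heS, norm_smul]
        by_cases hl : l ∈ S
        · rw [Set.indicator_of_mem hl, Set.indicator_of_mem hl]
          simpa [abs_of_nonneg hδ.le] using hΦu l hl
        · rw [Set.indicator_of_notMem hl, Set.indicator_of_notMem hl]; simp
      refine le_trans h1 ?_
      rw [norm_smul]
      simp only [RCLike.norm_ofReal, abs_of_nonneg hδ.le]
      calc δ * ‖eS‖ ≤ δ * (‖eS‖ + 1) := by nlinarith [hδ.le, norm_nonneg eS]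
        _ = ε := by rw [hδdef]; field_simp
    exact ⟨S, u, x0, hu, hx0, hru, hv⟩
  -- basic facts about the inner sets
  have hmemA : ∀ S : Set Λ, (0:ℝ) ∈ {a : ℝ | 0 ≤ a ∧ ∀ x : B, a * ‖x‖ ≤ ‖F.restrict S x‖} := by
    intro S
    exact ⟨le_rfl, fun x => by simp⟩
  have hubA : ∀ (S : Set Λ) (a : ℝ),
      a ∈ {a : ℝ | 0 ≤ a ∧ ∀ x : B, a * ‖x‖ ≤ ‖F.restrict S x‖} → a ≤ F.C := by
    intro S a ⟨ha0, hax⟩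
    have h1 := hax x0
    rw [hx0, mul_one] at h1
    have h2 := hRC S x0
    have h3 := F.upper x0
    rw [hx0, mul_one] at h3
    linarith
  have hbddA : ∀ S : Set Λ,
      BddAbove {a : ℝ | 0 ≤ a ∧ ∀ x : B, a * ‖x‖ ≤ ‖F.restrict S x‖} :=
    fun S => ⟨F.C, fun a ha => hubA S a ha⟩
  constructor
  · apply le_antisymm
    · apply Real.sSup_le _ le_rfl
      rintro s ⟨hs0, hsS⟩
      by_contra h
      push_neg at h
      obtain ⟨S, u, v, hu, hv, hSu, hSv⟩ := hmain (s/2) (by linarith)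
      have h1 : sSup {a : ℝ | 0 ≤ a ∧ ∀ x : B, a * ‖x‖ ≤ ‖F.restrict S x‖} ≤ s/2 := by
        apply Real.sSup_le _ (by linarith)
        rintro a ⟨ha0, hax⟩
        have := hax u
        rw [hu, mul_one] at this
        linarith
      have h2 : sSup {a : ℝ | 0 ≤ a ∧ ∀ x : B, a * ‖x‖ ≤ ‖F.restrict Sᶜ x‖} ≤ s/2 := by
        apply Real.sSup_le _ (by linarith)
        rintro a ⟨ha0, hax⟩
        have := hax v
        rw [hv, mul_one] at this
        linarith
      have := le_trans (hsS S) (max_le h1 h2)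
      linarith
    · apply le_csSup
      · refine ⟨F.C, ?_⟩
        rintro s ⟨hs0, hsS⟩
        refine le_trans (hsS ∅) (max_le ?_ ?_) <;>
          exact Real.sSup_le (fun a ha => hubA _ a ha) hC0
      · exact ⟨le_rfl, fun S => le_max_of_le_left (le_csSup (hbddA S) (hmemA S))⟩
  · exact hmain
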